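/- Let R be an algebraic curvature tensor on ℝⁿ (n ≥ 4). The following are equivalent: (i) for all orthonormal four-frames {e₁,e₂,e₃,e₄} and all λ, μ ∈ [0,1], R(e₁,e₃,e₁,e₃) + λ²R(e₁,e₄,e₁,e₄) + μ²R(e₂,e₃,e₂,e₃) + λ²μ²R(e₂,e₄,e₂,e₄) − 2λμR(e₁,e₂,e₃,e₄) ≥ 0; (ii) R(ζ,η,ζ̄,η̄) ≥ 0 for all vectors ζ, η ∈ ℂⁿ. -/

import Mathlib

noncomputable section
open scoped BigOperators ComplexOrder

def dotp {n : ℕ} (X Y : Fin n → ℝ) : ℝ := ∑ i, X i * Y i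

def ON4 {n : ℕ} (e₁ e₂ e₃ e₄ : Fin n → ℝ) : Prop :=
  dotp e₁ e₁ = 1 ∧ dotp e₂ e₂ = 1 ∧ dotp e₃ e₃ = 1 ∧ dotp e₄ e₄ = 1 ∧
  dotp e₁ e₂ = 0 ∧ dotp e₁ e₃ = 0 ∧ dotp e₁ e₄ = 0 ∧
  dotp e₂ e₃ = 0 ∧ dotp e₂ e₄ = 0 ∧ dotp e₃ e₄ = 0

/-- Complex bilinear extension of the standard inner product. -/
def gc {n : ℕ} (ζ η : Fin n → ℂ) : ℂ := ∑ i, ζ i * η i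

/-- Componentwise complex conjugation. -/
def conjv {n : ℕ} (ζ : Fin n → ℂ) : Fin n → ℂ := fun i => (starRingEnd ℂ) (ζ i)

/-- Inclusion of real vectors into the complexification. -/
def ιC {n : ℕ} (X : Fin n → ℝ) : Fin n → ℂ := fun i => (X i : ℂ)


open Complex
open scoped ComplexConjugate
set_option linter.unusedSectionVars false
section All

section Expand
variable {R : Type*} [CommRing R] {M : Type*} [AddCommGroup M] [Module R M]
variable (f : MultilinearMap R (fun _ : Fin 4 => M) R)

lemma up4_0 (x y z w t : M) : Function.update ![x,y,z,w] (0:Fin 4) t = ![t,y,z,w] := by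
  ext j; fin_cases j <;> simp
lemma up4_1 (x y z w t : M) : Function.update ![x,y,z,w] (1:Fin 4) t = ![x,t,z,w] := by
  ext j; fin_cases j <;> simp [Function.update]
lemma up4_2 (x y z w t : M) : Function.update ![x,y,z,w] (2:Fin 4) t = ![x,y,t,w] := by
  ext j; fin_cases j <;> simp [Function.update]
lemma up4_3 (x y z w t : M) : Function.update ![x,y,z,w] (3:Fin 4) t = ![x,y,z,t] := by
  ext j; fin_cases j <;> simp [Function.update]

lemma madd0 (x x' y z w : M) : f ![x+x',y,z,w] = f ![x,y,z,w] + f ![x',y,z,w] := by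
  have h := f.map_update_add ![x,y,z,w] 0 x x'
  simpa [up4_0] using h
lemma madd1 (x y y' z w : M) : f ![x,y+y',z,w] = f ![x,y,z,w] + f ![x,y',z,w] := by
  have h := f.map_update_add ![x,y,z,w] 1 y y'
  simpa [up4_1] using h
lemma madd2 (x y z z' w : M) : f ![x,y,z+z',w] = f ![x,y,z,w] + f ![x,y,z',w] := by
  have h := f.map_update_add ![x,y,z,w] 2 z z'
  simpa [up4_2] using h
lemma madd3 (x y z w w' : M) : f ![x,y,z,w+w'] = f ![x,y,z,w] + f ![x,y,z,w'] := by
  have h := f.map_update_add ![x,y,z,w] 3 w w'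
  simpa [up4_3] using h
lemma msmul0 (a : R) (x y z w : M) : f ![a•x,y,z,w] = a * f ![x,y,z,w] := by
  have h := f.map_update_smul ![x,y,z,w] 0 a x
  simpa [up4_0] using h
lemma msmul1 (a : R) (x y z w : M) : f ![x,a•y,z,w] = a * f ![x,y,z,w] := by
  have h := f.map_update_smul ![x,y,z,w] 1 a y
  simpa [up4_1] using h
lemma msmul2 (a : R) (x y z w : M) : f ![x,y,a•z,w] = a * f ![x,y,z,w] := by
  have h := f.map_update_smul ![x,y,z,w] 2 a z
  simpa [up4_2] using h
lemma msmul3 (a : R) (x y z w : M) : f ![x,y,z,a•w] = a * f ![x,y,z,w] := by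
  have h := f.map_update_smul ![x,y,z,w] 3 a w
  simpa [up4_3] using h

/-- Master 16-term expansion. -/
lemma mexpand (a b c d e k l m : R) (p q r s t u v w : M) :
    f ![a•p+b•q, c•r+d•s, e•t+k•u, l•v+m•w] =
      a*c*e*l * f ![p,r,t,v] + a*c*e*m * f ![p,r,t,w]
    + a*c*k*l * f ![p,r,u,v] + a*c*k*m * f ![p,r,u,w]
    + a*d*e*l * f ![p,s,t,v] + a*d*e*m * f ![p,s,t,w]
    + a*d*k*l * f ![p,s,u,v] + a*d*k*m * f ![p,s,u,w]
    + b*c*e*l * f ![q,r,t,v] + b*c*e*m * f ![q,r,t,w]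
    + b*c*k*l * f ![q,r,u,v] + b*c*k*m * f ![q,r,u,w]
    + b*d*e*l * f ![q,s,t,v] + b*d*e*m * f ![q,s,t,w]
    + b*d*k*l * f ![q,s,u,v] + b*d*k*m * f ![q,s,u,w] := by
  simp only [madd0, madd1, madd2, madd3, msmul0, msmul1, msmul2, msmul3]
  ring

end Expand

lemma vec4_eta {M : Type*} (v : Fin 4 → M) : ![v 0, v 1, v 2, v 3] = v := by
  ext j; fin_cases j <;> rfl

lemma swap01_vec {M : Type*} (a b c d : M) :
    (fun i => (![a,b,c,d]) (Equiv.swap (0:Fin 4) 1 i)) = ![b,a,c,d] := by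
  funext j; fin_cases j <;> simp [Equiv.swap_apply_def]

lemma swap23_vec {M : Type*} (a b c d : M) :
    (fun i => (![a,b,c,d]) (Equiv.swap (2:Fin 4) 3 i)) = ![a,b,d,c] := by
  funext j; fin_cases j <;> simp [Equiv.swap_apply_def]

section Sym
variable {n : ℕ}
  (R : MultilinearMap ℝ (fun _ : Fin 4 => (Fin n → ℝ)) ℝ)
  (Rc : MultilinearMap ℂ (fun _ : Fin 4 => (Fin n → ℂ)) ℂ)

lemma ιC_single (i : Fin n) : ιC (Pi.single i (1:ℝ)) = Pi.single i (1:ℂ) := by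
  funext j; simp [ιC, Pi.single_apply, apply_ite]

lemma Rc_anti12
    (hanti : ∀ X Y Z W, R ![X, Y, Z, W] = - R ![Y, X, Z, W])
    (hext : ∀ X Y Z W : Fin n → ℝ,
      Rc ![ιC X, ιC Y, ιC Z, ιC W] = (R ![X, Y, Z, W] : ℂ)) :
    ∀ ζ η ξ ω : Fin n → ℂ, Rc ![ζ, η, ξ, ω] = - Rc ![η, ζ, ξ, ω] := by
  have key : Rc = -(Rc.domDomCongr (Equiv.swap (0:Fin 4) 1)) := by
    apply Module.Basis.ext_multilinear (fun _ => Pi.basisFun ℂ (Fin n))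
    intro v
    have e1 : (fun i => (Pi.basisFun ℂ (Fin n)) (v i))
        = ![ιC (Pi.single (v 0) 1), ιC (Pi.single (v 1) 1), ιC (Pi.single (v 2) 1), ιC (Pi.single (v 3) 1)] := by
      funext j; fin_cases j <;> simp [ιC_single]
    rw [e1]
    simp only [MultilinearMap.neg_apply, MultilinearMap.domDomCongr_apply]
    rw [swap01_vec, hext, hext, hanti]
    push_cast; ring
  intro ζ η ξ ω
  conv_lhs => rw [key]
  simp only [MultilinearMap.neg_apply, MultilinearMap.domDomCongr_apply]
  rw [swap01_vec]

lemma Rc_anti34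
    (hanti : ∀ X Y Z W, R ![X, Y, Z, W] = - R ![Y, X, Z, W])
    (hpair : ∀ X Y Z W, R ![X, Y, Z, W] = R ![Z, W, X, Y])
    (hext : ∀ X Y Z W : Fin n → ℝ,
      Rc ![ιC X, ιC Y, ιC Z, ιC W] = (R ![X, Y, Z, W] : ℂ)) :
    ∀ ζ η ξ ω : Fin n → ℂ, Rc ![ζ, η, ξ, ω] = - Rc ![ζ, η, ω, ξ] := by
  have key : Rc = -(Rc.domDomCongr (Equiv.swap (2:Fin 4) 3)) := by
    apply Module.Basis.ext_multilinear (fun _ => Pi.basisFun ℂ (Fin n))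
    intro v
    have e1 : (fun i => (Pi.basisFun ℂ (Fin n)) (v i))
        = ![ιC (Pi.single (v 0) 1), ιC (Pi.single (v 1) 1), ιC (Pi.single (v 2) 1), ιC (Pi.single (v 3) 1)] := by
      funext j; fin_cases j <;> simp [ιC_single]
    rw [e1]
    simp only [MultilinearMap.neg_apply, MultilinearMap.domDomCongr_apply]
    rw [swap23_vec, hext, hext]
    have : (R ![Pi.single (v 0) 1, Pi.single (v 1) 1, Pi.single (v 2) 1, Pi.single (v 3) 1])
        = - R ![Pi.single (v 0) 1, Pi.single (v 1) 1, Pi.single (v 3) 1, Pi.single (v 2) 1] := by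
      rw [hpair, hanti, ← hpair]
    rw [this]; push_cast; ring
  intro ζ η ξ ω
  conv_lhs => rw [key]
  simp only [MultilinearMap.neg_apply, MultilinearMap.domDomCongr_apply]
  rw [swap23_vec]

end Sym

variable {n : ℕ} (Rc : MultilinearMap ℂ (fun _ : Fin 4 => (Fin n → ℂ)) ℂ)

lemma conjv_comb (α β : ℂ) (x y : Fin n → ℂ) :
    conjv (α•x + β•y) = (starRingEnd ℂ α)•conjv x + (starRingEnd ℂ β)•conjv y := by
  funext i; simp [conjv]

lemma mzero12 (a12 : ∀ ζ η ξ ω : Fin n → ℂ, Rc ![ζ, η, ξ, ω] = - Rc ![η, ζ, ξ, ω]) :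
    ∀ x z w, Rc ![x,x,z,w] = 0 := by
  intro x z w; linear_combination (a12 x x z w)/2

lemma mzero34 (a34 : ∀ ζ η ξ ω : Fin n → ℂ, Rc ![ζ, η, ξ, ω] = - Rc ![ζ, η, ω, ξ]) :
    ∀ x y z, Rc ![x,y,z,z] = 0 := by
  intro x y z; linear_combination (a34 x y z z)/2

lemma Finv (a12 : ∀ ζ η ξ ω : Fin n → ℂ, Rc ![ζ, η, ξ, ω] = - Rc ![η, ζ, ξ, ω])
    (a34 : ∀ ζ η ξ ω : Fin n → ℂ, Rc ![ζ, η, ξ, ω] = - Rc ![ζ, η, ω, ξ])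
    (α β γ δ : ℂ) (x y : Fin n → ℂ) :
    Rc ![α•x+β•y, γ•x+δ•y, conjv (α•x+β•y), conjv (γ•x+δ•y)]
    = ((α*δ-β*γ) * (starRingEnd ℂ) (α*δ-β*γ)) * Rc ![x,y,conjv x,conjv y] := by
  rw [conjv_comb, conjv_comb, mexpand Rc]
  have h1 := a12 y x (conjv x) (conjv y)
  have h2 := a34 x y (conjv y) (conjv x)
  have h3 : Rc ![y,x,conjv y,conjv x] = Rc ![x,y,conjv x,conjv y] := by
    rw [a12 y x (conjv y) (conjv x), a34 x y (conjv y) (conjv x)]; ring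
  rw [h1, h2, h3]
  simp only [mzero12 Rc a12, mzero34 Rc a34, mul_zero, zero_add, add_zero]
  simp only [map_sub, map_mul]
  ring

/-- Existence of a "con-eigenvector" for the 2×2 complex symmetric matrix [[p,q],[q,r]]. -/
lemma coneig (p q r : ℂ) :
    ∃ (u₁ u₂ : ℂ) (σ : ℝ), 0 ≤ σ ∧ normSq u₁ + normSq u₂ = 1 ∧
      p*u₁ + q*u₂ = (σ:ℂ) * conj u₁ ∧ q*u₁ + r*u₂ = (σ:ℂ) * conj u₂ := by
  set m₁ : ℝ := normSq p + normSq q with hm₁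
  set m₂ : ℝ := normSq q + normSq r with hm₂
  set w : ℂ := conj p * q + conj q * r with hw
  set δ : ℝ := Real.sqrt ((m₁ - m₂)^2 + 4 * normSq w) with hδ
  have hδnn : (0:ℝ) ≤ (m₁ - m₂)^2 + 4 * normSq w := by
    nlinarith [normSq_nonneg w, sq_nonneg (m₁ - m₂)]
  have hδ2 : δ^2 = (m₁ - m₂)^2 + 4 * normSq w := Real.sq_sqrt hδnn
  have hδge : |m₁ - m₂| ≤ δ := by
    rw [hδ, ← Real.sqrt_sq_eq_abs]
    exact Real.sqrt_le_sqrt (by nlinarith [normSq_nonneg w])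
  set t : ℝ := (m₁ + m₂ + δ)/2 with ht
  have habs := abs_le.mp hδge
  have ht1 : m₁ ≤ t := by rw [ht]; nlinarith
  have ht2 : m₂ ≤ t := by rw [ht]; nlinarith
  have ht0 : 0 ≤ t := le_trans (by rw [hm₁]; exact add_nonneg (normSq_nonneg p) (normSq_nonneg q)) ht1
  have hchar : (t - m₁) * (t - m₂) = normSq w := by
    rw [ht]; nlinarith [hδ2]
  have hcm1 : conj p * p + conj q * q = ((m₁:ℝ):ℂ) := by
    rw [hm₁]; push_cast [normSq_eq_conj_mul_self]; ring
  have hcm2 : conj q * q + conj r * r = ((m₂:ℝ):ℂ) := by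
    rw [hm₂]; push_cast [normSq_eq_conj_mul_self]; ring
  -- find an eigenvector (e₁, e₂) of A*A with eigenvalue t
  have h0 : conj p * q + conj q * r = w := hw.symm
  have hnormw : ((normSq w:ℝ):ℂ) = (conj p * q + conj q * r) * (p * conj q + q * conj r) := by
    rw [normSq_eq_conj_mul_self, hw]
    simp only [map_add, map_mul, conj_conj]
    ring
  obtain ⟨e₁, e₂, hene, eig1, eig2⟩ :
      ∃ e₁ e₂ : ℂ, ¬(e₁ = 0 ∧ e₂ = 0) ∧
        conj p * (p*e₁ + q*e₂) + conj q * (q*e₁ + r*e₂) = ((t:ℝ):ℂ) * e₁ ∧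
        conj q * (p*e₁ + q*e₂) + conj r * (q*e₁ + r*e₂) = ((t:ℝ):ℂ) * e₂ := by
    have hchar' : (conj p * q + conj q * r) * (p * conj q + q * conj r)
        = (((t:ℝ):ℂ) - ((m₁:ℝ):ℂ)) * (((t:ℝ):ℂ) - ((m₂:ℝ):ℂ)) := by
      rw [← hnormw]
      have := congrArg (Complex.ofReal) hchar
      push_cast at this
      rw [← this]
    by_cases hw0 : w = 0
    · have hw0q : conj p * q + conj q * r = 0 := by rw [← hw]; exact hw0
      have hw0c : p * conj q + q * conj r = 0 := by
        have := congrArg (starRingEnd ℂ) hw0q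
        simp only [map_add, map_mul, conj_conj, map_zero] at this
        exact this
      have hns : normSq w = 0 := by rw [hw0]; simp
      rcases mul_eq_zero.mp (by rw [hchar, hns]) with h | h
      · refine ⟨1, 0, by simp, ?_, ?_⟩
        · have htm : (t:ℝ) = m₁ := by linarith
          rw [htm, ← hcm1]; ring
        · linear_combination hw0c
      · refine ⟨0, 1, by simp, ?_, ?_⟩
        · linear_combination hw0q
        · have htm : (t:ℝ) = m₂ := by linarith
          rw [htm, ← hcm2]; ring
    · refine ⟨w, (((t - m₁ : ℝ)):ℂ), fun h => hw0 h.1, ?_, ?_⟩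
      · rw [hw]; push_cast
        linear_combination (conj p * q + conj q * r) * hcm1
      · rw [hw]; push_cast
        linear_combination hchar' + (((t:ℝ):ℂ) - ((m₁:ℝ):ℂ)) * hcm2
  set σ : ℝ := Real.sqrt t with hσ
  have hσ0 : 0 ≤ σ := Real.sqrt_nonneg t
  have hσ2 : ((σ:ℝ):ℂ)^2 = ((t:ℝ):ℂ) := by
    norm_cast; exact Real.sq_sqrt ht0
  -- candidate vector F = conj(A e) + σ e
  set F₁ : ℂ := conj (p*e₁ + q*e₂) + (σ:ℂ)*e₁ with hF₁
  set F₂ : ℂ := conj (q*e₁ + r*e₂) + (σ:ℂ)*e₂ with hF₂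
  have ceig1 := congrArg (starRingEnd ℂ) eig1
  have ceig2 := congrArg (starRingEnd ℂ) eig2
  simp only [map_add, map_mul, conj_conj, conj_ofReal] at ceig1 ceig2
  have claim1 : p*F₁ + q*F₂ = (σ:ℂ) * conj F₁ := by
    rw [hF₁, hF₂]
    simp only [map_add, map_mul, conj_conj, conj_ofReal]
    linear_combination ceig1 - conj e₁ * hσ2
  have claim2 : q*F₁ + r*F₂ = (σ:ℂ) * conj F₂ := by
    rw [hF₁, hF₂]
    simp only [map_add, map_mul, conj_conj, conj_ofReal]
    linear_combination ceig2 - conj e₂ * hσ2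
  -- get a nonzero con-eigenvector g
  obtain ⟨g₁, g₂, hgne, hg1, hg2⟩ :
      ∃ g₁ g₂ : ℂ, ¬(g₁ = 0 ∧ g₂ = 0) ∧
        p*g₁ + q*g₂ = (σ:ℂ) * conj g₁ ∧ q*g₁ + r*g₂ = (σ:ℂ) * conj g₂ := by
    by_cases hF : F₁ = 0 ∧ F₂ = 0
    · obtain ⟨h1, h2⟩ := hF
      rw [hF₁] at h1; rw [hF₂] at h2
      have h1' : p*e₁ + q*e₂ = -(σ:ℂ) * conj e₁ := by
        have := congrArg (starRingEnd ℂ) h1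
        simp only [map_add, map_mul, conj_conj, conj_ofReal, map_zero] at this
        linear_combination this
      have h2' : q*e₁ + r*e₂ = -(σ:ℂ) * conj e₂ := by
        have := congrArg (starRingEnd ℂ) h2
        simp only [map_add, map_mul, conj_conj, conj_ofReal, map_zero] at this
        linear_combination this
      refine ⟨I*e₁, I*e₂, ?_, ?_, ?_⟩
      · rintro ⟨ha, hb⟩
        exact hene ⟨by simpa using ha, by simpa using hb⟩
      · simp only [map_mul, conj_I]
        linear_combination I * h1'
      · simp only [map_mul, conj_I]
        linear_combination I * h2'
    · exact ⟨F₁, F₂, hF, claim1, claim2⟩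
  -- normalize
  have hpos : 0 < normSq g₁ + normSq g₂ := by
    rcases eq_or_ne g₁ 0 with h | h
    · have h2 : g₂ ≠ 0 := fun hh => hgne ⟨h, hh⟩
      have := normSq_pos.mpr h2
      have := normSq_nonneg g₁
      linarith
    · have := normSq_pos.mpr h
      have := normSq_nonneg g₂
      linarith
  set nn : ℝ := Real.sqrt (normSq g₁ + normSq g₂) with hnn
  have hnnpos : 0 < nn := Real.sqrt_pos.mpr hpos
  have hnn2 : nn^2 = normSq g₁ + normSq g₂ := Real.sq_sqrt hpos.le
  refine ⟨((nn⁻¹:ℝ):ℂ)*g₁, ((nn⁻¹:ℝ):ℂ)*g₂, σ, hσ0, ?_, ?_, ?_⟩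
  · simp only [normSq_mul, normSq_ofReal]
    field_simp
    linarith [hnn2]
  · simp only [map_mul, conj_ofReal]
    linear_combination ((nn⁻¹:ℝ):ℂ) * hg1
  · simp only [map_mul, conj_ofReal]
    linear_combination ((nn⁻¹:ℝ):ℂ) * hg2

/-- 2×2 Takagi-style normal form. -/
lemma takagi2 (p q r : ℂ) :
    ∃ (u₁ u₂ v₁ v₂ : ℂ) (σ₁ σ₂ : ℝ), 0 ≤ σ₁ ∧ 0 ≤ σ₂ ∧
      normSq u₁ + normSq u₂ = 1 ∧
      normSq v₁ + normSq v₂ = 1 ∧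
      u₁ * conj v₁ + u₂ * conj v₂ = 0 ∧
      p*(u₁*u₁) + q*(u₁*u₂) + q*(u₂*u₁) + r*(u₂*u₂) = ((σ₁:ℝ):ℂ) ∧
      p*(u₁*v₁) + q*(u₁*v₂) + q*(u₂*v₁) + r*(u₂*v₂) = 0 ∧
      p*(v₁*v₁) + q*(v₁*v₂) + q*(v₂*v₁) + r*(v₂*v₂) = ((σ₂:ℝ):ℂ) ∧
      normSq (u₁*v₂ - u₂*v₁) = 1 := by
  obtain ⟨u₁, u₂, σ, hσ0, hnorm, hu1, hu2⟩ := coneig p q r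
  have hmc1 : u₁ * conj u₁ = ((normSq u₁ : ℝ) : ℂ) := mul_conj u₁
  have hmc2 : u₂ * conj u₂ = ((normSq u₂ : ℝ) : ℂ) := mul_conj u₂
  have hnc : ((normSq u₁ : ℝ) : ℂ) + ((normSq u₂ : ℝ) : ℂ) = 1 := by
    exact_mod_cast hnorm
  set s : ℂ := p*((-conj u₂)*(-conj u₂)) + q*((-conj u₂)*(conj u₁))
      + q*((conj u₁)*(-conj u₂)) + r*((conj u₁)*(conj u₁)) with hs
  obtain ⟨z, hz⟩ := IsAlgClosed.exists_eq_mul_self s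
  set c : ℂ := if hs0 : s = 0 then 1 else conj z / ((‖z‖ : ℝ) : ℂ) with hc
  have hzabs : ‖s‖ = ‖z‖ ^ 2 := by
    rw [hz, norm_mul]; ring
  have hc1 : normSq c = 1 := by
    rw [hc]
    split_ifs with hs0
    · simp
    · have hzne : z ≠ 0 := by
        intro h; rw [h] at hz; simp at hz; exact hs0 hz
      have habs : ‖z‖ ≠ 0 := by simpa using hzne
      rw [normSq_div, normSq_conj, normSq_ofReal, ← Complex.sq_norm z]
      field_simp
  have hc2 : c*c*s = ((‖s‖ : ℝ) : ℂ) := by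
    rw [hc]
    split_ifs with hs0
    · rw [hs0]; simp
    · have hzne : z ≠ 0 := by
        intro h; rw [h] at hz; simp at hz; exact hs0 hz
      have habs : ‖z‖ ≠ 0 := by simpa using hzne
      have habs : ‖z‖ ≠ 0 := by simpa using hzne
      have habsC : ((‖z‖ : ℝ):ℂ) ≠ 0 := by exact_mod_cast habs
      have h1 : conj z * z = ((normSq z : ℝ):ℂ) := by rw [mul_comm]; exact mul_conj z
      have h2 : ((normSq z : ℝ):ℂ) = ((‖z‖^2 : ℝ):ℂ) := by
        norm_cast; exact (Complex.sq_norm z).symm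
      have key : conj z * conj z * (z*z)
          = ((‖z‖^2 : ℝ):ℂ) * ((‖z‖^2 : ℝ):ℂ) := by
        linear_combination (conj z * z + ((normSq z : ℝ):ℂ)) * h1
          + (((normSq z : ℝ):ℂ) + ((‖z‖^2 : ℝ):ℂ)) * h2
      rw [hzabs, hz, div_mul_div_comm, div_mul_eq_mul_div, div_eq_iff (by
        simpa using habsC : ((‖z‖ : ℝ):ℂ) * ((‖z‖ : ℝ):ℂ) ≠ 0)]
      push_cast at key ⊢
      linear_combination key
  refine ⟨u₁, u₂, c*(-conj u₂), c*(conj u₁), σ, ‖s‖, hσ0, norm_nonneg s,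
    hnorm, ?_, ?_, ?_, ?_, ?_, ?_⟩
  · simp only [normSq_mul, normSq_conj, normSq_neg, hc1]
    linarith [hnorm]
  · simp only [map_mul, map_neg, conj_conj]
    ring
  · linear_combination u₁*hu1 + u₂*hu2 + (σ:ℂ)*hmc1 + (σ:ℂ)*hmc2 + (σ:ℂ)*hnc
  · linear_combination (c * (-conj u₂)) * hu1 + (c * conj u₁) * hu2
  · linear_combination hc2 - (c*c)*hs
  · have key : u₁*(c*conj u₁) - u₂*(c*(-conj u₂)) = c := by
      linear_combination c*hmc1 + c*hmc2 + c*hnc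
    rw [key]; exact hc1

def reA {n : ℕ} (x : Fin n → ℂ) : Fin n → ℝ := fun i => (x i).re
def imA {n : ℕ} (x : Fin n → ℂ) : Fin n → ℝ := fun i => (x i).im
def herm {n : ℕ} (x y : Fin n → ℂ) : ℂ := ∑ i, x i * (starRingEnd ℂ) (y i)

variable {n : ℕ}

lemma dotp_comm (x y : Fin n → ℝ) : dotp x y = dotp y x := by
  unfold dotp; apply Finset.sum_congr rfl; intros; ring

lemma dotp_self_nonneg (x : Fin n → ℝ) : 0 ≤ dotp x x :=
  Finset.sum_nonneg fun i _ => mul_self_nonneg (x i)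

lemma dotp_self_pos {x : Fin n → ℝ} (h : x ≠ 0) : 0 < dotp x x := by
  obtain ⟨i, hi⟩ : ∃ i, x i ≠ 0 := by
    by_contra hc; push_neg at hc; exact h (funext hc)
  have h1 : 0 < x i * x i := mul_self_pos.mpr hi
  unfold dotp
  exact lt_of_lt_of_le h1 (Finset.single_le_sum (f := fun j => x j * x j)
    (fun j _ => mul_self_nonneg _) (Finset.mem_univ i))

lemma gc_comm (x y : Fin n → ℂ) : gc x y = gc y x := by
  unfold gc; apply Finset.sum_congr rfl; intros; ring

lemma gc_re (x y : Fin n → ℂ) :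
    (gc x y).re = dotp (reA x) (reA y) - dotp (imA x) (imA y) := by
  simp [gc, dotp, Complex.re_sum, Complex.mul_re, reA, imA, Finset.sum_sub_distrib]

lemma gc_im (x y : Fin n → ℂ) :
    (gc x y).im = dotp (reA x) (imA y) + dotp (imA x) (reA y) := by
  simp [gc, dotp, Complex.im_sum, Complex.mul_im, reA, imA, Finset.sum_add_distrib]

lemma herm_re (x y : Fin n → ℂ) :
    (herm x y).re = dotp (reA x) (reA y) + dotp (imA x) (imA y) := by
  simp [herm, dotp, Complex.re_sum, Complex.mul_re, reA, imA, Finset.sum_add_distrib, Complex.conj_re,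
    Complex.conj_im]

lemma herm_im (x y : Fin n → ℂ) :
    (herm x y).im = dotp (imA x) (reA y) - dotp (reA x) (imA y) := by
  simp only [herm, dotp, Complex.im_sum, Complex.mul_im, reA, imA, Complex.conj_re,
    Complex.conj_im]
  rw [← Finset.sum_sub_distrib]
  apply Finset.sum_congr rfl; intros; ring

lemma gc_comb (a₁ a₂ b₁ b₂ : ℂ) (w₁ w₂ : Fin n → ℂ) :
    gc (a₁•w₁+a₂•w₂) (b₁•w₁+b₂•w₂) = a₁*b₁*gc w₁ w₁ + a₁*b₂*gc w₁ w₂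
      + a₂*b₁*gc w₂ w₁ + a₂*b₂*gc w₂ w₂ := by
  simp only [gc, Pi.add_apply, Pi.smul_apply, smul_eq_mul, Finset.mul_sum,
    ← Finset.sum_add_distrib]
  apply Finset.sum_congr rfl; intros; ring

lemma herm_comb (a₁ a₂ b₁ b₂ : ℂ) (w₁ w₂ : Fin n → ℂ) :
    herm (a₁•w₁+a₂•w₂) (b₁•w₁+b₂•w₂) = a₁*(starRingEnd ℂ) b₁*herm w₁ w₁
      + a₁*(starRingEnd ℂ) b₂*herm w₁ w₂ + a₂*(starRingEnd ℂ) b₁*herm w₂ w₁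
      + a₂*(starRingEnd ℂ) b₂*herm w₂ w₂ := by
  simp only [herm, Pi.add_apply, Pi.smul_apply, smul_eq_mul, map_add, map_mul,
    Finset.mul_sum, ← Finset.sum_add_distrib]
  apply Finset.sum_congr rfl; intros; ring

def hn2 {n : ℕ} (x : Fin n → ℂ) : ℝ := dotp (reA x) (reA x) + dotp (imA x) (imA x)

lemma herm_self (x : Fin n → ℂ) : herm x x = ((hn2 x : ℝ) : ℂ) := by
  apply Complex.ext
  · rw [herm_re]; simp [hn2]
  · rw [herm_im]; simp [dotp_comm (imA x) (reA x)]

lemma hn2_pos {x : Fin n → ℂ} (h : x ≠ 0) : 0 < hn2 x := by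
  obtain ⟨i, hi⟩ : ∃ i, x i ≠ 0 := by
    by_contra hc; push_neg at hc; exact h (funext hc)
  have key : 0 < (x i).re * (x i).re + (x i).im * (x i).im := by
    rcases Complex.ext_iff.not.mp hi with _
    by_contra hc
    push_neg at hc
    have h1 := mul_self_nonneg (x i).re
    have h2 := mul_self_nonneg (x i).im
    have hre : (x i).re = 0 := by nlinarith
    have him : (x i).im = 0 := by nlinarith
    exact hi (Complex.ext hre him)
  unfold hn2 dotp
  rw [← Finset.sum_add_distrib]
  refine lt_of_lt_of_le key ?_
  apply Finset.single_le_sum (f := fun j => (reA x) j * (reA x) j + (imA x) j * (imA x) j)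
    (fun j _ => add_nonneg (mul_self_nonneg _) (mul_self_nonneg _)) (Finset.mem_univ i)

lemma recon (x : Fin n → ℂ) : x = ιC (reA x) + Complex.I • ιC (imA x) := by
  funext i
  apply Complex.ext <;> simp [ιC, reA, imA]

lemma ιC_smul (α : ℝ) (x : Fin n → ℝ) : ιC (α • x) = ((α:ℂ)) • ιC x := by
  funext i; simp [ιC]

lemma conjv_ιC (x : Fin n → ℝ) : conjv (ιC x) = ιC x := by
  funext i; simp [conjv, ιC]

section KeyF
variable {n : ℕ}
  (R : MultilinearMap ℝ (fun _ : Fin 4 => (Fin n → ℝ)) ℝ)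
  (Rc : MultilinearMap ℂ (fun _ : Fin 4 => (Fin n → ℂ)) ℂ)

lemma keyF
    (hanti : ∀ X Y Z W, R ![X, Y, Z, W] = - R ![Y, X, Z, W])
    (hpair : ∀ X Y Z W, R ![X, Y, Z, W] = R ![Z, W, X, Y])
    (hbianchi : ∀ X Y Z W,
      R ![X, Y, Z, W] + R ![Y, Z, X, W] + R ![Z, X, Y, W] = 0)
    (hext : ∀ X Y Z W : Fin n → ℝ,
      Rc ![ιC X, ιC Y, ιC Z, ιC W] = (R ![X, Y, Z, W] : ℂ))
    (e₁ e₂ e₃ e₄ : Fin n → ℝ) (α β γ δ : ℝ) :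
    Rc ![(α:ℂ)•ιC e₁ + ((β:ℂ)*Complex.I)•ιC e₂, (γ:ℂ)•ιC e₃ + ((δ:ℂ)*Complex.I)•ιC e₄,
        (α:ℂ)•ιC e₁ + (-((β:ℂ)*Complex.I))•ιC e₂, (γ:ℂ)•ιC e₃ + (-((δ:ℂ)*Complex.I))•ιC e₄]
    = ((α^2*γ^2 * R ![e₁,e₃,e₁,e₃] + α^2*δ^2 * R ![e₁,e₄,e₁,e₄]
        + β^2*γ^2 * R ![e₂,e₃,e₂,e₃] + β^2*δ^2 * R ![e₂,e₄,e₂,e₄]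
        - 2*α*β*γ*δ * R ![e₁,e₂,e₃,e₄] : ℝ) : ℂ) := by
  rw [mexpand]
  simp only [hext]
  have c1 : ((R ![e₁,e₃,e₁,e₄] : ℝ):ℂ) = ((R ![e₁,e₄,e₁,e₃] : ℝ):ℂ) := by
    exact_mod_cast congrArg Complex.ofReal (hpair e₁ e₃ e₁ e₄)
  have c2 : ((R ![e₁,e₃,e₂,e₃] : ℝ):ℂ) = ((R ![e₂,e₃,e₁,e₃] : ℝ):ℂ) := by
    exact_mod_cast congrArg Complex.ofReal (hpair e₁ e₃ e₂ e₃)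
  have c3 : ((R ![e₁,e₄,e₂,e₄] : ℝ):ℂ) = ((R ![e₂,e₄,e₁,e₄] : ℝ):ℂ) := by
    exact_mod_cast congrArg Complex.ofReal (hpair e₁ e₄ e₂ e₄)
  have c4 : ((R ![e₂,e₃,e₂,e₄] : ℝ):ℂ) = ((R ![e₂,e₄,e₂,e₃] : ℝ):ℂ) := by
    exact_mod_cast congrArg Complex.ofReal (hpair e₂ e₃ e₂ e₄)
  have c5 : ((R ![e₂,e₃,e₁,e₄] : ℝ):ℂ) = ((R ![e₁,e₄,e₂,e₃] : ℝ):ℂ) := by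
    exact_mod_cast congrArg Complex.ofReal (hpair e₂ e₃ e₁ e₄)
  have c6 : ((R ![e₂,e₄,e₁,e₃] : ℝ):ℂ) = ((R ![e₁,e₃,e₂,e₄] : ℝ):ℂ) := by
    exact_mod_cast congrArg Complex.ofReal (hpair e₂ e₄ e₁ e₃)
  have c7r : R ![e₁,e₂,e₃,e₄] = R ![e₁,e₃,e₂,e₄] - R ![e₁,e₄,e₂,e₃] := by
    have hb := hbianchi e₁ e₂ e₃ e₄
    have hp := hpair e₂ e₃ e₁ e₄
    have ha := hanti e₃ e₁ e₂ e₄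
    linarith
  have c7 : ((R ![e₁,e₂,e₃,e₄] : ℝ):ℂ)
      = ((R ![e₁,e₃,e₂,e₄] : ℝ):ℂ) - ((R ![e₁,e₄,e₂,e₃] : ℝ):ℂ) := by
    exact_mod_cast congrArg Complex.ofReal c7r
  push_cast
  linear_combination (-((α:ℂ)^2*(γ:ℂ)*(δ:ℂ)*Complex.I)) * c1
    + (-((α:ℂ)*(β:ℂ)*(γ:ℂ)^2*Complex.I)) * c2
    + (-((α:ℂ)*(β:ℂ)*(δ:ℂ)^2*Complex.I)) * c3
    + (-((β:ℂ)^2*(γ:ℂ)*(δ:ℂ)*Complex.I)) * c4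
    + ((α:ℂ)*(β:ℂ)*(γ:ℂ)*(δ:ℂ)) * c5
    + (-((α:ℂ)*(β:ℂ)*(γ:ℂ)*(δ:ℂ))) * c6
    + (2*(α:ℂ)*(β:ℂ)*(γ:ℂ)*(δ:ℂ)) * c7
    + ((α:ℂ)*(β:ℂ)*(γ:ℂ)*(δ:ℂ)*(((R ![e₁,e₃,e₂,e₄]:ℝ):ℂ) - ((R ![e₁,e₄,e₂,e₃]:ℝ):ℂ)
        - ((R ![e₂,e₃,e₁,e₄]:ℝ):ℂ) + ((R ![e₂,e₄,e₁,e₃]:ℝ):ℂ))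
      + (α:ℂ)*(β:ℂ)*(δ:ℂ)^2*Complex.I*(((R ![e₁,e₄,e₂,e₄]:ℝ):ℂ) - ((R ![e₂,e₄,e₁,e₄]:ℝ):ℂ))
      + (β:ℂ)^2*(γ:ℂ)*(δ:ℂ)*Complex.I*(((R ![e₂,e₃,e₂,e₄]:ℝ):ℂ) - ((R ![e₂,e₄,e₂,e₃]:ℝ):ℂ))
      - (α:ℂ)^2*(δ:ℂ)^2*((R ![e₁,e₄,e₁,e₄]:ℝ):ℂ)
      - (β:ℂ)^2*(γ:ℂ)^2*((R ![e₂,e₃,e₂,e₃]:ℝ):ℂ)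
      + (β:ℂ)^2*(δ:ℂ)^2*((R ![e₂,e₄,e₂,e₄]:ℝ):ℂ)*(Complex.I^2-1)) * Complex.I_sq

end KeyF

section Orth
variable {n : ℕ}

lemma dotp_smul_left (s : ℝ) (x y : Fin n → ℝ) : dotp (s • x) y = s * dotp x y := by
  simp only [dotp, Pi.smul_apply, smul_eq_mul, Finset.mul_sum]
  apply Finset.sum_congr rfl; intros; ring

lemma dotp_smul_right (s : ℝ) (x y : Fin n → ℝ) : dotp x (s • y) = s * dotp x y := by
  simp only [dotp, Pi.smul_apply, smul_eq_mul, Finset.mul_sum]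
  apply Finset.sum_congr rfl; intros; ring

lemma dotp_inner (x y : EuclideanSpace ℝ (Fin n)) :
    (inner ℝ x y : ℝ) = dotp (x.ofLp) (y.ofLp) := by
  simp [PiLp.inner_apply, RCLike.inner_apply, dotp]
  exact Finset.sum_congr rfl fun _ _ => mul_comm _ _

lemma exists_unit_orth (hn : 4 ≤ n) (v₁ v₂ v₃ : Fin n → ℝ) :
    ∃ u : Fin n → ℝ, dotp u u = 1 ∧ dotp u v₁ = 0 ∧ dotp u v₂ = 0 ∧ dotp u v₃ = 0 := by
  classical
  let E := EuclideanSpace ℝ (Fin n)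
  let K : Submodule ℝ E := Submodule.span ℝ (Set.range ![WithLp.toLp 2 v₁, WithLp.toLp 2 v₂, WithLp.toLp 2 v₃])
  have hK : Module.finrank ℝ K ≤ 3 := by
    have h := finrank_range_le_card (R := ℝ) (M := E) ![WithLp.toLp 2 v₁, WithLp.toLp 2 v₂, WithLp.toLp 2 v₃]
    simpa [Set.finrank] using h
  have hKne : K ≠ ⊤ := by
    intro h
    have h1 : Module.finrank ℝ E = n := by
      simp [E, finrank_euclideanSpace]
    rw [h] at hK
    rw [finrank_top, h1] at hK
    omega
  have hbot : Kᗮ ≠ ⊥ := by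
    intro h
    exact hKne (Submodule.orthogonal_eq_bot_iff.mp h)
  obtain ⟨u', hu'K, hu'ne⟩ := Submodule.exists_mem_ne_zero_of_ne_bot hbot
  set u : E := ‖u'‖⁻¹ • u' with hu
  have hnu : ‖u‖ = 1 := by
    rw [hu, norm_smul]
    simp [norm_inv, abs_norm, inv_mul_cancel₀ (norm_ne_zero_iff.mpr hu'ne)]
    rw [abs_of_nonneg (norm_nonneg _)]; exact inv_mul_cancel₀ (norm_ne_zero_iff.mpr hu'ne)
  have horth : ∀ v : E, v ∈ K → (inner ℝ u v : ℝ) = 0 := by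
    intro v hv
    rw [hu, real_inner_smul_left]
    rw [Submodule.mem_orthogonal] at hu'K
    rw [real_inner_comm, hu'K v hv, mul_zero]
  have hmem : ∀ i : Fin 3, (![WithLp.toLp 2 v₁, WithLp.toLp 2 v₂, WithLp.toLp 2 v₃] i) ∈ K :=
    fun i => Submodule.subset_span ⟨i, rfl⟩
  refine ⟨u.ofLp, ?_, ?_, ?_, ?_⟩
  · rw [← dotp_inner, real_inner_self_eq_norm_mul_norm, hnu]; norm_num
  · rw [← dotp_inner]; exact horth _ (hmem 0)
  · rw [← dotp_inner]; exact horth _ (hmem 1)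
  · rw [← dotp_inner]; exact horth _ (hmem 2)

lemma build_frame (hn : 4 ≤ n) (a b c d : Fin n → ℝ)
    (hab : dotp a b = 0) (hac : dotp a c = 0) (had : dotp a d = 0)
    (hbc : dotp b c = 0) (hbd : dotp b d = 0) (hcd : dotp c d = 0)
    (ha : a ≠ 0) (hc : c ≠ 0) :
    ∃ e₁ e₂ e₃ e₄, ON4 e₁ e₂ e₃ e₄ ∧
      a = Real.sqrt (dotp a a) • e₁ ∧ b = Real.sqrt (dotp b b) • e₂ ∧
      c = Real.sqrt (dotp c c) • e₃ ∧ d = Real.sqrt (dotp d d) • e₄ := by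
  classical
  set α := Real.sqrt (dotp a a) with hα
  set β := Real.sqrt (dotp b b) with hβ
  set γ := Real.sqrt (dotp c c) with hγ
  set δ := Real.sqrt (dotp d d) with hδ
  have hαpos : 0 < α := Real.sqrt_pos.mpr (dotp_self_pos ha)
  have hγpos : 0 < γ := Real.sqrt_pos.mpr (dotp_self_pos hc)
  have hα2 : α^2 = dotp a a := Real.sq_sqrt (dotp_self_nonneg a)
  have hβ2 : β^2 = dotp b b := Real.sq_sqrt (dotp_self_nonneg b)
  have hγ2 : γ^2 = dotp c c := Real.sq_sqrt (dotp_self_nonneg c)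
  have hδ2 : δ^2 = dotp d d := Real.sq_sqrt (dotp_self_nonneg d)
  set e₁ := α⁻¹ • a with he₁
  set e₃ := γ⁻¹ • c with he₃
  obtain ⟨u₄, hu₄n, hu₄a, hu₄b, hu₄c⟩ := exists_unit_orth hn a b c
  set e₄ := if d = 0 then u₄ else δ⁻¹ • d with he₄
  obtain ⟨u₂, hu₂n, hu₂a, hu₂c, hu₂e⟩ := exists_unit_orth hn a c e₄
  set e₂ := if b = 0 then u₂ else β⁻¹ • b with he₂
  have hδpos : d ≠ 0 → 0 < δ := fun h => Real.sqrt_pos.mpr (dotp_self_pos h)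
  have hβpos : b ≠ 0 → 0 < β := fun h => Real.sqrt_pos.mpr (dotp_self_pos h)
  have unit : ∀ (x : Fin n → ℝ) (s : ℝ), s^2 = dotp x x → 0 < s → dotp (s⁻¹ • x) (s⁻¹ • x) = 1 := by
    intro x s h hs
    rw [dotp_smul_left, dotp_smul_right, ← h]
    field_simp
  have hδ0 : d = 0 → δ = 0 := by
    intro h; rw [hδ, h]; simp [dotp]
  have hβ0 : b = 0 → β = 0 := by
    intro h; rw [hβ, h]; simp [dotp]
  refine ⟨e₁, e₂, e₃, e₄, ⟨?_, ?_, ?_, ?_, ?_, ?_, ?_, ?_, ?_, ?_⟩, ?_, ?_, ?_, ?_⟩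
  · exact unit a α hα2 hαpos
  · rw [he₂]; split_ifs with hb
    · exact hu₂n
    · exact unit b β hβ2 (hβpos hb)
  · exact unit c γ hγ2 hγpos
  · rw [he₄]; split_ifs with hd
    · exact hu₄n
    · exact unit d δ hδ2 (hδpos hd)
  · rw [he₁, he₂]; split_ifs with hb
    · rw [dotp_smul_left, dotp_comm, hu₂a, mul_zero]
    · rw [dotp_smul_left, dotp_smul_right, hab]; ring
  · rw [he₁, he₃, dotp_smul_left, dotp_smul_right, hac]; ring
  · rw [he₁, he₄]; split_ifs with hd
    · rw [dotp_smul_left, dotp_comm, hu₄a, mul_zero]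
    · rw [dotp_smul_left, dotp_smul_right, had]; ring
  · rw [he₂, he₃]; split_ifs with hb
    · rw [dotp_smul_right, hu₂c, mul_zero]
    · rw [dotp_smul_left, dotp_smul_right, hbc]; ring
  · rw [he₂]; split_ifs with hb
    · exact hu₂e
    · rw [he₄]; split_ifs with hd
      · rw [dotp_smul_left, dotp_comm b u₄, hu₄b, mul_zero]
      · rw [dotp_smul_left, dotp_smul_right, hbd]; ring
  · rw [he₃, he₄]; split_ifs with hd
    · rw [dotp_smul_left, dotp_comm c u₄, hu₄c, mul_zero]
    · rw [dotp_smul_left, dotp_smul_right, hcd]; ring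
  · rw [he₁, smul_smul, mul_inv_cancel₀ hαpos.ne', one_smul]
  · rw [he₂]; split_ifs with hb
    · rw [hb, hβ0 hb, zero_smul]
    · rw [smul_smul, mul_inv_cancel₀ (hβpos hb).ne', one_smul]
  · rw [he₃, smul_smul, mul_inv_cancel₀ hγpos.ne', one_smul]
  · rw [he₄]; split_ifs with hd
    · rw [hd, hδ0 hd, zero_smul]
    · rw [smul_smul, mul_inv_cancel₀ (hδpos hd).ne', one_smul]
end Orth

section MainAux
variable {n : ℕ}

lemma herm_smul (a b : ℂ) (x y : Fin n → ℂ) :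
    herm (a•x) (b•y) = a * (starRingEnd ℂ) b * herm x y := by
  simp only [herm, Pi.smul_apply, smul_eq_mul, map_mul, Finset.mul_sum]
  apply Finset.sum_congr rfl; intros; ring

lemma herm_smul_left (a : ℂ) (x y : Fin n → ℂ) : herm (a•x) y = a * herm x y := by
  simp only [herm, Pi.smul_apply, smul_eq_mul, Finset.mul_sum]
  apply Finset.sum_congr rfl; intros; ring

lemma herm_sub_left (x y z : Fin n → ℂ) : herm (x - y) z = herm x z - herm y z := by
  simp only [herm, Pi.sub_apply, sub_mul, Finset.sum_sub_distrib]

lemma herm_conj (x y : Fin n → ℂ) : herm x y = (starRingEnd ℂ) (herm y x) := by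
  simp only [herm, map_sum, map_mul, Complex.conj_conj]
  apply Finset.sum_congr rfl; intros; ring

lemma conj_combo (α β : ℝ) (e f : Fin n → ℝ) :
    conjv ((α:ℂ)•ιC e + ((β:ℂ)*Complex.I)•ιC f)
      = (α:ℂ)•ιC e + (-((β:ℂ)*Complex.I))•ιC f := by
  funext i
  simp only [conjv, ιC, Pi.add_apply, Pi.smul_apply, smul_eq_mul, map_add, map_mul,
    Complex.conj_ofReal, Complex.conj_I]
  ring

end MainAux

end All

theorem pic2_iff_complex_sectional_nonneg {n : ℕ} (hn : 4 ≤ n)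
    (R : MultilinearMap ℝ (fun _ : Fin 4 => (Fin n → ℝ)) ℝ)
    (hanti : ∀ X Y Z W, R ![X, Y, Z, W] = - R ![Y, X, Z, W])
    (hpair : ∀ X Y Z W, R ![X, Y, Z, W] = R ![Z, W, X, Y])
    (hbianchi : ∀ X Y Z W,
      R ![X, Y, Z, W] + R ![Y, Z, X, W] + R ![Z, X, Y, W] = 0)
    (Rc : MultilinearMap ℂ (fun _ : Fin 4 => (Fin n → ℂ)) ℂ)
    (hext : ∀ X Y Z W : Fin n → ℝ,
      Rc ![ιC X, ιC Y, ιC Z, ιC W] = (R ![X, Y, Z, W] : ℂ)) :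
    (∀ e₁ e₂ e₃ e₄ : Fin n → ℝ, ON4 e₁ e₂ e₃ e₄ →
      ∀ lam mu : ℝ, lam ∈ Set.Icc (0 : ℝ) 1 → mu ∈ Set.Icc (0 : ℝ) 1 →
      0 ≤ R ![e₁, e₃, e₁, e₃] + lam ^ 2 * R ![e₁, e₄, e₁, e₄]
          + mu ^ 2 * R ![e₂, e₃, e₂, e₃] + lam ^ 2 * mu ^ 2 * R ![e₂, e₄, e₂, e₄]
          - 2 * lam * mu * R ![e₁, e₂, e₃, e₄]) ↔
    (∀ ζ η : Fin n → ℂ, 0 ≤ Rc ![ζ, η, conjv ζ, conjv η]) := by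
  have a12 := Rc_anti12 R Rc hanti hext
  have a34 := Rc_anti34 R Rc hanti hpair hext
  constructor
  · intro hi ζ η
    by_cases hζ : ζ = 0
    · have h0 : Rc ![ζ, η, conjv ζ, conjv η] = 0 := by
        apply Rc.map_coord_zero (i := 0)
        rw [hζ]; rfl
      rw [h0]
    · set lam1 : ℝ := Real.sqrt (hn2 ζ) with hlam1def
      have hl1 : 0 < lam1 := Real.sqrt_pos.mpr (hn2_pos hζ)
      have hl12 : lam1^2 = hn2 ζ := Real.sq_sqrt (hn2_pos hζ).le
      set w₁ : Fin n → ℂ := ((lam1⁻¹ : ℝ):ℂ) • ζ with hw₁def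
      have hζw : ζ = ((lam1:ℝ):ℂ) • w₁ := by
        rw [hw₁def, smul_smul, ← Complex.ofReal_mul, mul_inv_cancel₀ hl1.ne',
          Complex.ofReal_one, one_smul]
      have h11 : herm w₁ w₁ = 1 := by
        rw [hw₁def, herm_smul, herm_self, Complex.conj_ofReal, ← hl12,
          ← Complex.ofReal_mul, ← Complex.ofReal_mul]
        norm_cast
        field_simp
      set γ0 := herm η w₁ with hγ0def
      set w₂p := η - γ0 • w₁ with hw₂pdef
      by_cases hw2 : w₂p = 0
      · have hηe : η = (γ0 * ((lam1⁻¹:ℝ):ℂ)) • ζ := by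
          rw [hw₂pdef] at hw2
          have he : η = γ0 • w₁ := by
            have := sub_eq_zero.mp hw2
            exact this
          rw [he, hw₁def, smul_smul]
        have h0 : Rc ![ζ, η, conjv ζ, conjv η] = 0 := by
          conv_lhs => rw [hηe]
          rw [msmul1 Rc, mzero12 Rc a12, mul_zero]
        rw [h0]
      · set lam2 : ℝ := Real.sqrt (hn2 w₂p) with hlam2def
        have hl2 : 0 < lam2 := Real.sqrt_pos.mpr (hn2_pos hw2)
        have hl22 : lam2^2 = hn2 w₂p := Real.sq_sqrt (hn2_pos hw2).le
        set w₂ : Fin n → ℂ := ((lam2⁻¹ : ℝ):ℂ) • w₂p with hw₂def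
        have hl2c : ((lam2:ℝ):ℂ) • w₂ = w₂p := by
          rw [hw₂def, smul_smul, ← Complex.ofReal_mul, mul_inv_cancel₀ hl2.ne',
            Complex.ofReal_one, one_smul]
        have hηe : η = γ0 • w₁ + ((lam2:ℝ):ℂ) • w₂ := by
          rw [hl2c, hw₂pdef]
          abel
        have h22 : herm w₂ w₂ = 1 := by
          rw [hw₂def, herm_smul, herm_self, Complex.conj_ofReal, ← hl22,
            ← Complex.ofReal_mul, ← Complex.ofReal_mul]
          norm_cast
          field_simp
        have h21 : herm w₂ w₁ = 0 := by
          rw [hw₂def, herm_smul_left, hw₂pdef, herm_sub_left, herm_smul_left, h11,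
            mul_one, ← hγ0def, sub_self, mul_zero]
        have h12 : herm w₁ w₂ = 0 := by
          rw [herm_conj, h21, map_zero]
        obtain ⟨u₁,u₂,v₁,v₂,σ₁,σ₂,hσ₁0,hσ₂0,hun,hvn,huv,hBuu,hBuv,hBvv,hdet⟩ :=
          takagi2 (gc w₁ w₁) (gc w₁ w₂) (gc w₂ w₂)
        have hζ2 : ζ = ((lam1:ℝ):ℂ) • w₁ + (0:ℂ) • w₂ := by
          rw [zero_smul, add_zero]; exact hζw
        have step1 : Rc ![ζ, η, conjv ζ, conjv η]
            = ((((lam1:ℝ):ℂ) * ((lam2:ℝ):ℂ) - 0 * γ0)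
               * (starRingEnd ℂ) (((lam1:ℝ):ℂ) * ((lam2:ℝ):ℂ) - 0 * γ0))
              * Rc ![w₁, w₂, conjv w₁, conjv w₂] := by
          conv_lhs => rw [hζ2, hηe]
          exact Finv Rc a12 a34 _ _ _ _ w₁ w₂
        have hdetC : (u₁*v₂ - u₂*v₁) * (starRingEnd ℂ) (u₁*v₂ - u₂*v₁) = 1 := by
          rw [Complex.mul_conj, hdet, Complex.ofReal_one]
        have step2 : Rc ![u₁•w₁+u₂•w₂, v₁•w₁+v₂•w₂,
              conjv (u₁•w₁+u₂•w₂), conjv (v₁•w₁+v₂•w₂)]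
            = Rc ![w₁, w₂, conjv w₁, conjv w₂] := by
          rw [Finv Rc a12 a34 u₁ u₂ v₁ v₂ w₁ w₂, hdetC, one_mul]
        set V₁ := u₁•w₁+u₂•w₂ with hV₁def
        set V₂ := v₁•w₁+v₂•w₂ with hV₂def
        have gc11 : gc V₁ V₁ = ((σ₁:ℝ):ℂ) := by
          rw [hV₁def, gc_comb, gc_comm w₂ w₁]; linear_combination hBuu
        have gc12 : gc V₁ V₂ = 0 := by
          rw [hV₁def, hV₂def, gc_comb, gc_comm w₂ w₁]; linear_combination hBuv
        have gc22 : gc V₂ V₂ = ((σ₂:ℝ):ℂ) := by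
          rw [hV₂def, gc_comb, gc_comm w₂ w₁]; linear_combination hBvv
        have herm11 : herm V₁ V₁ = 1 := by
          rw [hV₁def, herm_comb, h11, h12, h21, h22]
          simp only [mul_one, mul_zero, add_zero, zero_add]
          rw [Complex.mul_conj, Complex.mul_conj]
          exact_mod_cast hun
        have herm12 : herm V₁ V₂ = 0 := by
          rw [hV₁def, hV₂def, herm_comb, h11, h12, h21, h22]
          simp only [mul_one, mul_zero, add_zero, zero_add]
          exact huv
        have herm22 : herm V₂ V₂ = 1 := by
          rw [hV₂def, herm_comb, h11, h12, h21, h22]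
          simp only [mul_one, mul_zero, add_zero, zero_add]
          rw [Complex.mul_conj, Complex.mul_conj]
          exact_mod_cast hvn
        set aa := reA V₁ with haa
        set bb := imA V₁ with hbb
        set cc := reA V₂ with hcc
        set dd := imA V₂ with hdd
        have r1 : dotp aa aa - dotp bb bb = σ₁ := by
          have h := congrArg Complex.re gc11
          rw [gc_re, Complex.ofReal_re] at h
          simp only [← haa, ← hbb] at h
          exact h
        have r2 : dotp aa bb = 0 := by
          have h := congrArg Complex.im gc11
          rw [gc_im, Complex.ofReal_im] at h
          simp only [← haa, ← hbb] at h
          have hcm := dotp_comm aa bb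
          linarith
        have r3 : dotp aa aa + dotp bb bb = 1 := by
          have h := congrArg Complex.re herm11
          rw [herm_re, Complex.one_re] at h
          simp only [← haa, ← hbb] at h
          exact h
        have r4 : dotp aa cc - dotp bb dd = 0 := by
          have h := congrArg Complex.re gc12
          rw [gc_re, Complex.zero_re] at h
          simp only [← haa, ← hbb, ← hcc, ← hdd] at h
          exact h
        have r5 : dotp aa dd + dotp bb cc = 0 := by
          have h := congrArg Complex.im gc12
          rw [gc_im, Complex.zero_im] at h
          simp only [← haa, ← hbb, ← hcc, ← hdd] at h
          exact h
        have r6 : dotp aa cc + dotp bb dd = 0 := by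
          have h := congrArg Complex.re herm12
          rw [herm_re, Complex.zero_re] at h
          simp only [← haa, ← hbb, ← hcc, ← hdd] at h
          exact h
        have r7 : dotp bb cc - dotp aa dd = 0 := by
          have h := congrArg Complex.im herm12
          rw [herm_im, Complex.zero_im] at h
          simp only [← haa, ← hbb, ← hcc, ← hdd] at h
          exact h
        have r8 : dotp cc cc - dotp dd dd = σ₂ := by
          have h := congrArg Complex.re gc22
          rw [gc_re, Complex.ofReal_re] at h
          simp only [← hcc, ← hdd] at h
          exact h
        have r9 : dotp cc dd = 0 := by
          have h := congrArg Complex.im gc22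
          rw [gc_im, Complex.ofReal_im] at h
          simp only [← hcc, ← hdd] at h
          have hcm := dotp_comm cc dd
          linarith
        have r10 : dotp cc cc + dotp dd dd = 1 := by
          have h := congrArg Complex.re herm22
          rw [herm_re, Complex.one_re] at h
          simp only [← hcc, ← hdd] at h
          exact h
        have hac : dotp aa cc = 0 := by linarith
        have hbd : dotp bb dd = 0 := by linarith
        have had : dotp aa dd = 0 := by linarith
        have hbc : dotp bb cc = 0 := by linarith
        have haa2 : dotp aa aa = (1+σ₁)/2 := by linarith
        have hbb2 : dotp bb bb = (1-σ₁)/2 := by linarith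
        have hcc2 : dotp cc cc = (1+σ₂)/2 := by linarith
        have hdd2 : dotp dd dd = (1-σ₂)/2 := by linarith
        have hane : aa ≠ 0 := by
          intro h
          rw [h] at haa2
          simp [dotp] at haa2
          linarith
        have hcne : cc ≠ 0 := by
          intro h
          rw [h] at hcc2
          simp [dotp] at hcc2
          linarith
        obtain ⟨e₁,e₂,e₃,e₄,hON,hra,hrb,hrc,hrd⟩ :=
          build_frame hn aa bb cc dd r2 hac had hbc hbd r9 hane hcne
        set α := Real.sqrt (dotp aa aa) with hαdef
        set β := Real.sqrt (dotp bb bb) with hβdef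
        set γ := Real.sqrt (dotp cc cc) with hγdef
        set δ := Real.sqrt (dotp dd dd) with hδdef
        have hαpos : 0 < α := Real.sqrt_pos.mpr (dotp_self_pos hane)
        have hγpos : 0 < γ := Real.sqrt_pos.mpr (dotp_self_pos hcne)
        have hβnn : 0 ≤ β := Real.sqrt_nonneg _
        have hδnn : 0 ≤ δ := Real.sqrt_nonneg _
        have hβle : β ≤ α := by
          rw [hβdef, hαdef]; exact Real.sqrt_le_sqrt (by linarith)
        have hδle : δ ≤ γ := by
          rw [hδdef, hγdef]; exact Real.sqrt_le_sqrt (by linarith)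
        have hV₁e : V₁ = ((α:ℝ):ℂ)•ιC e₁ + (((β:ℝ):ℂ)*Complex.I)•ιC e₂ := by
          conv_lhs => rw [recon V₁]
          rw [← haa, ← hbb, hra, hrb, ιC_smul, ιC_smul, smul_smul, mul_comm Complex.I]
        have hV₂e : V₂ = ((γ:ℝ):ℂ)•ιC e₃ + (((δ:ℝ):ℂ)*Complex.I)•ιC e₄ := by
          conv_lhs => rw [recon V₂]
          rw [← hcc, ← hdd, hrc, hrd, ιC_smul, ιC_smul, smul_smul, mul_comm Complex.I]
        set E : ℝ := α^2*γ^2 * R ![e₁,e₃,e₁,e₃] + α^2*δ^2 * R ![e₁,e₄,e₁,e₄]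
            + β^2*γ^2 * R ![e₂,e₃,e₂,e₃] + β^2*δ^2 * R ![e₂,e₄,e₂,e₄]
            - 2*α*β*γ*δ * R ![e₁,e₂,e₃,e₄] with hEdef
        have hFV : Rc ![V₁, V₂, conjv V₁, conjv V₂] = ((E:ℝ):ℂ) := by
          rw [hV₁e, hV₂e, conj_combo, conj_combo,
            keyF R Rc hanti hpair hbianchi hext e₁ e₂ e₃ e₄ α β γ δ, hEdef]
        have hlam_mem : δ/γ ∈ Set.Icc (0:ℝ) 1 :=
          ⟨div_nonneg hδnn hγpos.le, (div_le_one hγpos).mpr hδle⟩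
        have hmu_mem : β/α ∈ Set.Icc (0:ℝ) 1 :=
          ⟨div_nonneg hβnn hαpos.le, (div_le_one hαpos).mpr hβle⟩
        have hIneq := hi e₁ e₂ e₃ e₄ hON (δ/γ) (β/α) hlam_mem hmu_mem
        have hE : 0 ≤ E := by
          have hexp : E = (α^2*γ^2) * (R ![e₁,e₃,e₁,e₃] + (δ/γ)^2 * R ![e₁,e₄,e₁,e₄]
              + (β/α)^2 * R ![e₂,e₃,e₂,e₃] + (δ/γ)^2*(β/α)^2 * R ![e₂,e₄,e₂,e₄]
              - 2*(δ/γ)*(β/α) * R ![e₁,e₂,e₃,e₄]) := by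
            rw [hEdef]; field_simp
          rw [hexp]
          exact mul_nonneg (by positivity) hIneq
        have step3 : Rc ![ζ, η, conjv ζ, conjv η] = (((lam1*lam2)^2 * E : ℝ):ℂ) := by
          rw [step1, ← step2, hFV]
          simp only [map_sub, map_mul, Complex.conj_ofReal, map_zero, zero_mul,
            mul_zero, sub_zero]
          push_cast
          ring
        rw [step3, Complex.zero_le_real]
        exact mul_nonneg (sq_nonneg _) hE
  · intro hii e₁ e₂ e₃ e₄ hON lam mu hlam hmu
    have h := hii (((1:ℝ):ℂ)•ιC e₁ + (((mu:ℝ):ℂ)*Complex.I)•ιC e₂)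
                  (((1:ℝ):ℂ)•ιC e₃ + (((lam:ℝ):ℂ)*Complex.I)•ιC e₄)
    rw [conj_combo, conj_combo,
      keyF R Rc hanti hpair hbianchi hext e₁ e₂ e₃ e₄ 1 mu 1 lam,
      Complex.zero_le_real] at h
    exact h.trans_eq (by ring)
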